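/- Let H_1 and H_2 be 3-uniform hypergraphs, each equipped with two designated edges (e_1, f_1 in H_1 and e_2, f_2 in H_2) such that dist_{H_i}(e_i, f_i) = d ≥ 5 for i = 1,2, where dist denotes the minimum number of vertices on a loose connecting path between the two edges. Let H' be obtained from disjoint copies of H_1 and H_2 by identifying the edge f_1 with e_2 in such a way that no vertex of e_1 is identified with a vertex of f_2. Then dist_{H'}(e_1, f_2) ≥ d + 1. -/

import Mathlib

/-- `S` is the vertex set of a connecting path from edge `e` to edge `f` in the 3-uniform
hypergraph with edge set `E`: a nonempty sequence of edges starting at `e`, ending at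
`f`, consecutive ones intersecting, whose vertices admit a linear order (a duplicate-free
list) in which every edge of the path is a consecutive segment, with `S` the union of the
path's edges. -/
def IsConnPath {V : Type} [DecidableEq V] (E : Finset (Finset V))
    (e f : Finset V) (S : Finset V) : Prop :=
  ∃ es : List (Finset V), es ≠ [] ∧ es.head? = some e ∧ es.getLast? = some f ∧
    (∀ g ∈ es, g ∈ E) ∧ es.Chain' (fun g h => (g ∩ h).Nonempty) ∧
    S = es.foldr (· ∪ ·) ∅ ∧
    ∃ vs : List V, vs.Nodup ∧ vs.toFinset = S ∧
      ∀ g ∈ es, ∃ a : ℕ, g = ((vs.drop a).take 3).toFinset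


section Aux

open List

variable {V : Type} [DecidableEq V]

def seg (vs : List V) (a : ℕ) : Finset V := ((vs.drop a).take 3).toFinset

lemma mem_seg_of_pos {vs : List V} {a p : ℕ} (hap : a ≤ p) (hpa : p < a + 3)
    (hp : p < vs.length) : vs[p] ∈ seg vs a := by
  unfold seg
  rw [List.mem_toFinset, List.mem_iff_getElem]
  have hlen : p - a < ((vs.drop a).take 3).length := by
    simp [List.length_take, List.length_drop]; omega
  refine ⟨p - a, hlen, ?_⟩
  rw [List.getElem_take, List.getElem_drop]
  congr 1; omega

lemma pos_of_mem_seg {vs : List V} (hvs : vs.Nodup) {a : ℕ} {x : V} (hx : x ∈ seg vs a) :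
    x ∈ vs ∧ a ≤ vs.idxOf x ∧ vs.idxOf x < a + 3 := by
  unfold seg at hx
  rw [List.mem_toFinset, List.mem_iff_getElem] at hx
  obtain ⟨j, hj, hxe⟩ := hx
  have hj3 : j < 3 := lt_of_lt_of_le hj (by simp [List.length_take])
  have hjd : j < (vs.drop a).length := lt_of_lt_of_le hj (by
    simpa using List.length_take_le 3 (vs.drop a))
  rw [List.getElem_take, List.getElem_drop] at hxe
  have hlt : a + j < vs.length := by
    have := (List.length_drop (i := a) (l := vs)) ▸ hjd
    omega
  have hmem : x ∈ vs := hxe ▸ List.getElem_mem _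
  have hidx : vs.idxOf x < vs.length := List.idxOf_lt_length_iff.mpr hmem
  have : vs[vs.idxOf x] = vs[a+j] := by rw [List.getElem_idxOf hidx, hxe]
  have hEq := (hvs.getElem_inj_iff).mp this
  exact ⟨hmem, by omega, by omega⟩

lemma seg_card_le_bound {vs : List V} {a : ℕ} {g : Finset V} (hg : g = seg vs a)
    (h3 : g.card = 3) : a + 3 ≤ vs.length := by
  have h1 : g.card ≤ ((vs.drop a).take 3).length := by
    rw [hg]; unfold seg; exact List.toFinset_card_le _
  rw [h3] at h1
  simp only [List.length_take, List.length_drop] at h1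
  omega

lemma mem_foldr_union {es : List (Finset V)} {x : V} :
    x ∈ es.foldr (· ∪ ·) ∅ ↔ ∃ g ∈ es, x ∈ g := by
  induction es with
  | nil => simp
  | cons a t ih => simp [ih]

lemma foldr_union_init (es : List (Finset V)) (X : Finset V) :
    es.foldr (· ∪ ·) X = es.foldr (· ∪ ·) ∅ ∪ X := by
  induction es with
  | nil => simp
  | cons a t ih => simp [ih, Finset.union_assoc]

lemma foldr_union_perm {es es' : List (Finset V)} (h : es ~ es') :
    es.foldr (· ∪ ·) ∅ = es'.foldr (· ∪ ·) ∅ := by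
  ext x
  rw [mem_foldr_union, mem_foldr_union]
  constructor
  · rintro ⟨g, hg, hx⟩; exact ⟨g, h.mem_iff.mp hg, hx⟩
  · rintro ⟨g, hg, hx⟩; exact ⟨g, h.mem_iff.mpr hg, hx⟩

lemma nat_ivt_aux (f : ℕ → ℕ) (p : ℕ) : ∀ (m u : ℕ),
    (∀ i, u ≤ i → i < u + m → f (i+1) ≤ f i + 2 ∧ f i ≤ f (i+1) + 2) →
    f u ≤ p → p < f (u + m) + 3 →
    ∃ t, u ≤ t ∧ t ≤ u + m ∧ f t ≤ p ∧ p < f t + 3 := by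
  intro m
  induction m with
  | zero => intro u _ h1 h2; exact ⟨u, le_refl u, by omega, h1, by simpa using h2⟩
  | succ m ih =>
    intro u hstep h1 h2
    by_cases hc : f (u+1) ≤ p
    · obtain ⟨t, ht1, ht2, ht3, ht4⟩ := ih (u+1) (fun i hi1 hi2 => hstep i (by omega) (by omega))
        hc (by rw [show u + 1 + m = u + (m+1) by omega]; exact h2)
      exact ⟨t, by omega, by omega, ht3, ht4⟩
    · have := (hstep u (le_refl u) (by omega)).1
      exact ⟨u, le_refl u, by omega, h1, by omega⟩

lemma nat_ivt (f : ℕ → ℕ) (p u v : ℕ)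
    (hstep : ∀ i, min u v ≤ i → i < max u v → f (i+1) ≤ f i + 2 ∧ f i ≤ f (i+1) + 2)
    (h1 : f u ≤ p) (h2 : p < f v + 3) :
    ∃ t, min u v ≤ t ∧ t ≤ max u v ∧ f t ≤ p ∧ p < f t + 3 := by
  rcases le_total u v with h | h
  · obtain ⟨t, ht⟩ := nat_ivt_aux f p (v - u) u
      (fun i hi1 hi2 => hstep i (by omega) (by omega)) h1
      (by rw [show u + (v-u) = v by omega]; exact h2)
    exact ⟨t, by omega, by omega, ht.2.2⟩
  · -- u ≥ v : use reversed function
    obtain ⟨t, ht⟩ := nat_ivt_aux (fun i => f (u - i)) p (u - v) 0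
      (fun i hi1 hi2 => by
        have := hstep (u - i - 1) (by omega) (by omega)
        have e1 : u - (i+1) = u - i - 1 := by omega
        have e2 : u - i = (u - i - 1) + 1 := by omega
        rw [e1, e2]
        exact ⟨this.2, this.1⟩)
      (by simpa using h1) (by simpa [show u - (u - v) = v by omega] using h2)
    exact ⟨u - t, by omega, by omega, ht.2.2⟩

lemma seg_reverse {vs : List V} {a : ℕ} (ha : a + 3 ≤ vs.length) :
    seg vs.reverse (vs.length - 3 - a) = seg vs a := by
  unfold seg
  have h1 : vs.reverse.drop (vs.length - 3 - a) = (vs.take (a + 3)).reverse := by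
    rw [List.reverse_take]
    congr 1
    omega
  rw [h1]
  have h2 : (vs.take (a+3)).reverse.take 3 = ((vs.take (a+3)).drop a).reverse := by
    rw [List.reverse_drop]
    congr 1
    rw [List.length_take]
    omega
  rw [h2, List.drop_take]
  have : a + 3 - a = 3 := by omega
  rw [this]
  ext x
  simp

lemma perm_toFinset {l1 l2 : List V} (h : l1 ~ l2) : l1.toFinset = l2.toFinset := by
  ext x; simp [h.mem_iff]

lemma build (vs : List V) (es : List (Finset V)) (f : Finset V) (l c r : ℕ)
    (hvs : vs.Nodup) (hr : r ≤ vs.length) (hlc : l ≤ c) (hcr : c ≤ r)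
    (hseg : ∀ g ∈ es, ∃ a, l ≤ a ∧ g = seg vs a ∧ (a + 3 ≤ c ∨ (a ≤ c ∧ a + 3 = r)))
    (hcov : es.foldr (· ∪ ·) ∅ = ((vs.drop l).take (r-l)).toFinset)
    (hF2 : f ∩ es.foldr (· ∪ ·) ∅ ⊆ ((vs.drop c).take (r-c)).toFinset)
    (hf3 : f.card = 3) :
    ∃ vs1 : List V, vs1.Nodup ∧ vs1.toFinset = es.foldr (· ∪ ·) ∅ ∪ f ∧
      (∀ g ∈ es, ∃ a, g = seg vs1 a) ∧ (∃ a, f = seg vs1 a) := by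
  classical
  set A := es.foldr (· ∪ ·) ∅ with hA
  set blk := (vs.drop l).take (c - l) with hblk
  set zs := (vs.drop c).take (r - c) with hzs
  set Z := zs.toFinset with hZ
  set zs1 := zs.filter (fun x => !decide (x ∈ f)) with hzs1
  set zs2 := zs.filter (fun x => decide (x ∈ f)) with hzs2
  set tl := (f \ Z).toList with htl
  have len_blk : blk.length = c - l := by
    rw [hblk, List.length_take, List.length_drop]; omega
  have len_zs : zs.length = r - c := by
    rw [hzs, List.length_take, List.length_drop]; omega
  have hperm : zs1 ++ zs2 ~ zs := by
    have := List.filter_append_perm (fun x => !decide (x ∈ f)) zs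
    simpa [hzs1, hzs2, Bool.not_not] using this
  have blkzs : blk ++ zs = (vs.drop l).take (r - l) := by
    rw [hblk, hzs]
    have h1 : r - l = (c - l) + (r - c) := by omega
    rw [h1, List.take_add]
    congr 2
    rw [List.drop_drop]
    congr 1
    omega
  have ndbig0 : (blk ++ zs).Nodup := by
    rw [blkzs]; exact ((List.take_sublist _ _).trans (List.drop_sublist _ _)).nodup hvs
  have permbig : blk ++ (zs1 ++ zs2) ~ blk ++ zs := (hperm.append_left blk)
  have ndbig : (blk ++ (zs1 ++ zs2)).Nodup := permbig.nodup_iff.mpr ndbig0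
  have bigF : (blk ++ (zs1 ++ zs2)).toFinset = A := by
    rw [perm_toFinset permbig, blkzs, hcov]
  have hZA : Z ⊆ A := by
    intro x hx
    rw [← bigF, List.mem_toFinset, permbig.mem_iff, List.mem_append]
    exact Or.inr (List.mem_toFinset.mp hx)
  set vs1 := (blk ++ (zs1 ++ zs2)) ++ tl with hvs1
  have ndtl : tl.Nodup := Finset.nodup_toList _
  have htlmem : ∀ x, x ∈ tl ↔ (x ∈ f ∧ x ∉ Z) := by
    intro x; rw [htl, Finset.mem_toList, Finset.mem_sdiff]
  have nd1 : vs1.Nodup := by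
    refine ndbig.append ndtl ?_
    intro x hx hx2
    rw [htlmem] at hx2
    have : x ∈ f ∩ A := by
      rw [Finset.mem_inter]
      exact ⟨hx2.1, by rw [← bigF]; exact List.mem_toFinset.mpr hx⟩
    exact hx2.2 (hF2 this)
  have tf1 : vs1.toFinset = A ∪ f := by
    rw [hvs1, List.toFinset_append, bigF]
    ext x
    simp only [Finset.mem_union, List.mem_toFinset]
    rw [htlmem]
    constructor
    · rintro (h | ⟨h, _⟩)
      · exact Or.inl h
      · exact Or.inr h
    · rintro (h | h)
      · exact Or.inl h
      · by_cases hz : x ∈ Z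
        · exact Or.inl (hZA hz)
        · exact Or.inr ⟨h, hz⟩
  refine ⟨vs1, nd1, tf1, ?_, ?_⟩
  · -- edges of es
    intro g hg
    obtain ⟨a, hla, hga, hcase⟩ := hseg g hg
    refine ⟨a - l, ?_⟩
    have hdrop : vs1.drop (a - l) = blk.drop (a - l) ++ ((zs1 ++ zs2) ++ tl) := by
      rw [hvs1, List.append_assoc, List.drop_append]
      congr 1
      have : a - l - blk.length = 0 := by omega
      rw [this, List.drop_zero]
    have hblkdrop : blk.drop (a - l) = (vs.drop a).take (c - a) := by
      rw [hblk, List.drop_take, List.drop_drop]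
      congr 1
      · omega
      · congr 1; omega
    rcases hcase with hc1 | ⟨hc2, hc3⟩
    · -- fully inside blk
      rw [seg, hdrop, List.take_append]
      have hlen : (blk.drop (a-l)).length = c - a := by
        rw [List.length_drop, len_blk]; omega
      have h30 : 3 - (blk.drop (a-l)).length = 0 := by rw [hlen]; omega
      rw [h30, List.take_zero, List.append_nil, hblkdrop, List.take_take]
      have : min 3 (c - a) = 3 := by omega
      rw [this, hga, seg]
    · -- spans blk and the zone
      rw [seg, hdrop, List.take_append]
      have hlen : (blk.drop (a-l)).length = c - a := by
        rw [List.length_drop, len_blk]; omega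
      rw [List.take_append (l₁ := zs1 ++ zs2) (l₂ := tl)]
      have hlen2 : (zs1 ++ zs2).length = r - c := by
        rw [hperm.length_eq, len_zs]
      have h31 : 3 - (blk.drop (a-l)).length = r - c := by rw [hlen]; omega
      rw [h31]
      have h32 : r - c - (zs1 ++ zs2).length = 0 := by rw [hlen2]; omega
      rw [h32, List.take_zero, List.append_nil]
      have htk : (zs1 ++ zs2).take (r - c) = zs1 ++ zs2 := by
        apply List.take_of_length_le
        rw [hlen2]
      rw [htk, List.take_of_length_le (by rw [hlen]; omega)]
      rw [hblkdrop]
      rw [List.toFinset_append, perm_toFinset hperm]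
      have : ((vs.drop a).take (c-a)).toFinset ∪ zs.toFinset = ((vs.drop a).take ((c-a) + (r-c))).toFinset := by
        rw [List.take_add, List.toFinset_append]
        congr 2
        rw [hzs, List.drop_drop]
        congr 2
        omega
      rw [this]
      have h3 : c - a + (r - c) = 3 := by omega
      rw [h3, hga, seg]
  · -- f itself
    refine ⟨blk.length + zs1.length, ?_⟩
    have hdrop : vs1.drop (blk.length + zs1.length) = zs2 ++ tl := by
      rw [hvs1, List.drop_append, List.drop_append,
        List.drop_append]
      have e1 : blk.length + zs1.length - blk.length = zs1.length := by omega
      have e2 : blk.length + zs1.length - (blk ++ (zs1 ++ zs2)).length = 0 := by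
        simp only [List.length_append]; omega
      have e3 : List.drop (blk.length + zs1.length) blk = [] :=
        List.drop_eq_nil_of_le (by omega)
      have e4 : List.drop zs1.length zs1 = [] := List.drop_eq_nil_of_le (le_refl _)
      rw [e1, e2, e3, e4, List.drop_zero]
      have e5 : zs1.length - zs1.length = 0 := by omega
      rw [e5, List.drop_zero]
      simp
    have hzs2set : zs2.toFinset = Z ∩ f := by
      ext x
      rw [hzs2, List.mem_toFinset, List.mem_filter]
      simp [hZ, List.mem_toFinset]
    have lenzs2 : zs2.length = (Z ∩ f).card := by
      have nd2 : zs2.Nodup := (List.Nodup.filter _ (ndbig0.of_append_right))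
      rw [← hzs2set, List.card_toFinset, nd2.dedup]
    have lentl : tl.length = (f \ Z).card := by rw [htl, Finset.length_toList]
    have hlen3 : (zs2 ++ tl).length = 3 := by
      rw [List.length_append, lenzs2, lentl, Finset.inter_comm]
      rw [Finset.card_inter_add_card_sdiff, hf3]
    rw [seg, hdrop, List.take_of_length_le (by rw [hlen3])]
    ext x
    rw [List.mem_toFinset, List.mem_append, htlmem, ← List.mem_toFinset, hzs2set]
    constructor
    · intro hx
      by_cases hz : x ∈ Z
      · exact Or.inl (Finset.mem_inter.mpr ⟨hz, hx⟩)
      · exact Or.inr ⟨hx, hz⟩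
    · rintro (hx | hx)
      · exact (Finset.mem_inter.mp hx).2
      · exact hx.1

lemma steps_of_chain {es : List (Finset V)} {vs : List V} {aa : ℕ → ℕ}
    (hvs : vs.Nodup)
    (hchain : es.Chain' (fun g h => (g ∩ h).Nonempty))
    (haa : ∀ i (h : i < es.length), aa i + 3 ≤ vs.length ∧ es[i] = seg vs (aa i)) :
    ∀ i, i + 1 < es.length → aa (i+1) ≤ aa i + 2 ∧ aa i ≤ aa (i+1) + 2 := by
  intro i hi
  have hrel := List.isChain_iff_getElem.mp hchain i (by omega)
  obtain ⟨x, hx⟩ := hrel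
  rw [Finset.mem_inter] at hx
  have hx1 : x ∈ seg vs (aa i) := (haa i (by omega)).2 ▸ hx.1
  have hx2 : x ∈ seg vs (aa (i+1)) := (haa (i+1) hi).2 ▸ hx.2
  have p1 := pos_of_mem_seg hvs hx1
  have p2 := pos_of_mem_seg hvs hx2
  omega

lemma mem_block {vs : List V} {l r p : ℕ} (h1 : l ≤ p) (h2 : p < r)
    (hp : p < vs.length) : vs[p] ∈ ((vs.drop l).take (r - l)).toFinset := by
  rw [List.mem_toFinset, List.mem_iff_getElem]
  have hlen : p - l < ((vs.drop l).take (r-l)).length := by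
    simp [List.length_take, List.length_drop]; omega
  refine ⟨p - l, hlen, ?_⟩
  rw [List.getElem_take, List.getElem_drop]
  congr 1; omega

lemma block_mem {vs : List V} {l r : ℕ} {x : V}
    (hx : x ∈ ((vs.drop l).take (r - l)).toFinset) :
    ∃ p, l ≤ p ∧ p < r ∧ ∃ (hp : p < vs.length), vs[p] = x := by
  rw [List.mem_toFinset, List.mem_iff_getElem] at hx
  obtain ⟨j, hj, hxe⟩ := hx
  have hj1 : j < r - l := lt_of_lt_of_le hj (by simpa using List.length_take_le _ _)
  have hj2 : j < (vs.drop l).length := lt_of_lt_of_le hj (by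
    simpa using List.length_take_le _ _)
  have hj3 : l + j < vs.length := by
    have := (List.length_drop (i := l) (l := vs)) ▸ hj2; omega
  rw [List.getElem_take, List.getElem_drop] at hxe
  exact ⟨l + j, by omega, by omega, hj3, hxe⟩

lemma glue_right (E : Finset (Finset V)) (e f : Finset V) (es : List (Finset V))
    (vs : List V) (aa : ℕ → ℕ)
    (hvs : vs.Nodup) (hne : es ≠ []) (hhead : es.head? = some e)
    (hmemE : ∀ g ∈ es, g ∈ E) (hfE : f ∈ E)
    (hchain : es.Chain' (fun g h => (g ∩ h).Nonempty))
    (haa : ∀ i (h : i < es.length), aa i + 3 ≤ vs.length ∧ es[i] = seg vs (aa i))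
    (hf3 : f.card = 3)
    (hmeet : ∀ (h : es.length - 1 < es.length), (f ∩ es[es.length - 1]).Nonempty)
    (hmiss : ∀ i (h : i < es.length), i < es.length - 1 → f ∩ es[i] = ∅)
    (hord : ∀ i, i < es.length - 1 → aa i ≤ aa (es.length - 1)) :
    IsConnPath E e f (es.foldr (· ∪ ·) ∅ ∪ f) := by
  classical
  set n := es.length with hn
  have hn0 : 0 < n := List.length_pos_iff.mpr hne
  have hstep := steps_of_chain hvs hchain haa
  -- the key construction
  have hbuild : ∃ vs1 : List V, vs1.Nodup ∧ vs1.toFinset = es.foldr (· ∪ ·) ∅ ∪ f ∧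
      (∀ g ∈ es, ∃ a, g = seg vs1 a) ∧ (∃ a, f = seg vs1 a) := by
    rcases Nat.lt_or_ge 1 n with hn2 | hn1
    · -- n ≥ 2
      set am := aa (n - 1) with ham
      set T := (Finset.range (n-1)).image aa with hT
      have hTne : T.Nonempty := ⟨aa 0, Finset.mem_image.mpr ⟨0, Finset.mem_range.mpr (by omega), rfl⟩⟩
      set l := T.min' hTne with hl
      set mx := T.max' hTne with hmx
      obtain ⟨u, hu, huv⟩ := Finset.mem_image.mp (T.min'_mem hTne)
      obtain ⟨v, hv, hvv⟩ := Finset.mem_image.mp (T.max'_mem hTne)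
      rw [Finset.mem_range] at hu hv
      have hml : ∀ i, i < n - 1 → l ≤ aa i := fun i hi =>
        T.min'_le _ (Finset.mem_image.mpr ⟨i, Finset.mem_range.mpr hi, rfl⟩)
      have hmxg : ∀ i, i < n - 1 → aa i ≤ mx := fun i hi =>
        T.le_max' _ (Finset.mem_image.mpr ⟨i, Finset.mem_range.mpr hi, rfl⟩)
      set c := mx + 3 with hc
      set r := am + 3 with hr
      have hlam : l ≤ am := by rw [hl, ← huv]; exact hord u hu
      have hamc : am ≤ c := by
        have := hstep (n-2) (by omega)
        have h2 := hmxg (n-2) (by omega)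
        have : aa (n-2+1) ≤ aa (n-2) + 2 := this.1
        have he : n - 2 + 1 = n - 1 := by omega
        rw [he] at this
        omega
      have hcr : c ≤ r := by
        have hma : mx ≤ am := by rw [hmx, ← hvv]; exact hord v hv
        omega
      have hrlen : r ≤ vs.length := (haa (n-1) (by omega)).1
      have hlc : l ≤ c := by
        have := hmxg u hu
        omega
      -- coverage of [l, c)
      have hcovlow : ∀ p, l ≤ p → p < c → ∃ t, t < n - 1 ∧ aa t ≤ p ∧ p < aa t + 3 := by
        intro p hp1 hp2
        obtain ⟨t, ht1, ht2, ht3, ht4⟩ := nat_ivt aa p u v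
          (fun i hi1 hi2 => hstep i (by omega)) (huv ▸ hp1) (by rw [hvv]; omega)
        exact ⟨t, by omega, ht3, ht4⟩
      have hbig : ∀ i, i < n → l ≤ aa i ∧ aa i + 3 ≤ r := by
        intro i hi
        rcases Nat.lt_or_ge i (n-1) with h | h
        · exact ⟨hml i h, by have := hord i h; omega⟩
        · have : i = n - 1 := by omega
          rw [this]; exact ⟨hlam, le_refl _⟩
      -- index of members
      have hidx : ∀ (x : V) i, i < n → x ∈ es[i]! → True := fun _ _ _ _ => trivial
      apply build vs es f l c r hvs hrlen hlc hcr
      · -- hseg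
        intro g hg
        obtain ⟨i, hi, hgi⟩ := List.mem_iff_getElem.mp hg
        refine ⟨aa i, (hbig i hi).1, by rw [← hgi]; exact (haa i hi).2, ?_⟩
        rcases Nat.lt_or_ge i (n-1) with h | h
        · left; have := hmxg i h; omega
        · right; have : i = n - 1 := by omega
          rw [this]; exact ⟨hamc, rfl⟩
      · -- hcov
        ext x
        rw [mem_foldr_union]
        constructor
        · rintro ⟨g, hg, hxg⟩
          obtain ⟨i, hi, hgi⟩ := List.mem_iff_getElem.mp hg
          have hxs : x ∈ seg vs (aa i) := by rw [← (haa i hi).2, hgi]; exact hxg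
          obtain ⟨hxv, hp1, hp2⟩ := pos_of_mem_seg hvs hxs
          have hplen : vs.idxOf x < vs.length := List.idxOf_lt_length_iff.mpr hxv
          have := mem_block (vs := vs) (p := vs.idxOf x) (l := l) (r := r)
            (by have := (hbig i hi).1; omega) (by have := (hbig i hi).2; omega) hplen
          rwa [List.getElem_idxOf hplen] at this
        · intro hx
          obtain ⟨p, hpl, hpr, hplen, hpx⟩ := block_mem hx
          rcases Nat.lt_or_ge p c with h | h
          · obtain ⟨t, ht, ht1, ht2⟩ := hcovlow p hpl h
            refine ⟨es[t]'(by omega), List.getElem_mem _, ?_⟩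
            rw [(haa t (by omega)).2, ← hpx]
            exact mem_seg_of_pos ht1 ht2 hplen
          · refine ⟨es[n-1]'(by omega), List.getElem_mem _, ?_⟩
            rw [(haa (n-1) (by omega)).2, ← hpx]
            exact mem_seg_of_pos (by omega) (by omega) hplen
      · -- hF2
        intro x hx
        rw [Finset.mem_inter, mem_foldr_union] at hx
        obtain ⟨hxf, g, hg, hxg⟩ := hx
        obtain ⟨i, hi, hgi⟩ := List.mem_iff_getElem.mp hg
        have hieq : i = n - 1 := by
          by_contra hne'
          have hmi := hmiss i hi (by omega)
          have : x ∈ f ∩ es[i] := Finset.mem_inter.mpr ⟨hxf, hgi ▸ hxg⟩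
          rw [hmi] at this
          exact absurd this (Finset.notMem_empty x)
        subst hieq
        have hxs : x ∈ seg vs am := by rw [← (haa (n-1) (by omega)).2, hgi]; exact hxg
        obtain ⟨hxv, hp1, hp2⟩ := pos_of_mem_seg hvs hxs
        set p := vs.idxOf x with hp
        have hplen : p < vs.length := List.idxOf_lt_length_iff.mpr hxv
        have hpc : c ≤ p := by
          by_contra hpc
          push_neg at hpc
          obtain ⟨t, ht, ht1, ht2⟩ := hcovlow p (by omega) hpc
          have : x ∈ es[t]'(by omega) := by
            rw [(haa t (by omega)).2, ← List.getElem_idxOf hplen]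
            exact mem_seg_of_pos ht1 ht2 hplen
          have hmi := hmiss t (by omega) (by omega)
          have : x ∈ f ∩ es[t]'(by omega) := Finset.mem_inter.mpr ⟨hxf, this⟩
          rw [hmi] at this
          exact absurd this (Finset.notMem_empty x)
        have := mem_block (vs := vs) (p := p) (l := c) (r := r) hpc (by omega) hplen
        rwa [List.getElem_idxOf hplen] at this
      · exact hf3
    · -- n = 1
      have hn1' : n = 1 := by omega
      have hes : es = [es[0]'(by omega)] := by
        rcases es with _ | ⟨g, t⟩
        · exact absurd rfl hne
        · have : t.length = 0 := by simpa [hn] using hn1'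
          rw [List.length_eq_zero_iff] at this
          subst this; rfl
      apply build vs es f (aa 0) (aa 0) (aa 0 + 3) hvs (haa 0 (by omega)).1
        (le_refl _) (by omega)
      · intro g hg
        rw [hes, List.mem_singleton] at hg
        subst hg
        exact ⟨aa 0, le_refl _, (haa 0 (by omega)).2, Or.inr ⟨le_refl _, rfl⟩⟩
      · conv_lhs => rw [hes]
        simp only [List.foldr_cons, List.foldr_nil, Finset.union_empty]
        have : aa 0 + 3 - aa 0 = 3 := by omega
        rw [this]
        exact (haa 0 (by omega)).2
      · intro x hx
        rw [Finset.mem_inter] at hx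
        have hA : x ∈ es.foldr (· ∪ ·) ∅ := hx.2
        rw [mem_foldr_union] at hA
        obtain ⟨g, hg, hxg⟩ := hA
        rw [hes, List.mem_singleton] at hg
        subst hg
        have : aa 0 + 3 - aa 0 = 3 := by omega
        rw [this]
        have := (haa 0 (by omega)).2 ▸ hxg
        exact this
      · exact hf3
  -- assembly
  obtain ⟨vs1, hnd1, htf1, hsegs, ⟨af, haf⟩⟩ := hbuild
  refine ⟨es ++ [f], by simp, ?_, List.getLast?_concat, ?_, ?_, ?_, vs1, hnd1, htf1, ?_⟩
  · rcases es with _ | ⟨g, t⟩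
    · exact absurd rfl hne
    · simpa using hhead
  · intro g hg
    rcases List.mem_append.mp hg with h | h
    · exact hmemE g h
    · rw [List.mem_singleton] at h; subst h; exact hfE
  · refine List.isChain_append.mpr ?_
    refine ⟨hchain, List.isChain_singleton f, ?_⟩
    intro x hx y hy
    simp only [List.head?_cons, Option.mem_def, Option.some.injEq] at hy
    subst hy
    have hgl : es.getLast? = some (es[n-1]'(by omega)) := by
      rw [List.getLast?_eq_getElem?, List.getElem?_eq_getElem (by omega)]
    rw [hgl, Option.mem_def, Option.some.injEq] at hx
    subst hx
    rw [Finset.inter_comm]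
    exact hmeet (by omega)
  · rw [List.foldr_append]
    simp only [List.foldr_cons, List.foldr_nil]
    rw [foldr_union_init es (f ∪ ∅), Finset.union_empty]
  · intro g hg
    rcases List.mem_append.mp hg with h | h
    · obtain ⟨a, ha⟩ := hsegs g h
      exact ⟨a, ha⟩
    · rw [List.mem_singleton] at h; subst h
      exact ⟨af, haf⟩

lemma glue (E : Finset (Finset V)) (e f : Finset V) (es : List (Finset V))
    (vs : List V)
    (hvs : vs.Nodup) (hne : es ≠ []) (hhead : es.head? = some e)
    (hmemE : ∀ g ∈ es, g ∈ E) (hfE : f ∈ E)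
    (hchain : es.Chain' (fun g h => (g ∩ h).Nonempty))
    (hseg : ∀ g ∈ es, ∃ a, a + 3 ≤ vs.length ∧ g = seg vs a)
    (hf3 : f.card = 3)
    (hmeet : ∀ (h : es.length - 1 < es.length), (f ∩ es[es.length - 1]).Nonempty)
    (hmiss : ∀ i (h : i < es.length), i < es.length - 1 → f ∩ es[i] = ∅) :
    IsConnPath E e f (es.foldr (· ∪ ·) ∅ ∪ f) := by
  classical
  set n := es.length with hn
  have hn0 : 0 < n := List.length_pos_iff.mpr hne
  have hsegi : ∀ i (h : i < n), ∃ a, a + 3 ≤ vs.length ∧ es[i] = seg vs a :=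
    fun i h => hseg (es[i]'h) (List.getElem_mem h)
  set aa : ℕ → ℕ := fun i => if h : i < n then (hsegi i h).choose else 0 with haadef
  have haa : ∀ i (h : i < n), aa i + 3 ≤ vs.length ∧ es[i] = seg vs (aa i) := by
    intro i h
    have : aa i = (hsegi i h).choose := by rw [haadef]; simp [h]
    rw [this]
    exact (hsegi i h).choose_spec
  have hstep := steps_of_chain hvs hchain haa
  by_cases hord : ∀ i, i < n - 1 → aa i ≤ aa (n - 1)
  · exact glue_right E e f es vs aa hvs hne hhead hmemE hfE hchain haa hf3 hmeet hmiss hord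
  · push_neg at hord
    obtain ⟨j, hj, hjgt⟩ := hord
    -- all indices below n-1 have aa i > aa (n-1)
    have hall : ∀ i, i < n - 1 → aa (n-1) < aa i := by
      intro i hi
      by_contra hle
      push_neg at hle
      obtain ⟨x0, hx0⟩ := hmeet (by omega)
      rw [Finset.mem_inter] at hx0
      have hxs : x0 ∈ seg vs (aa (n-1)) := (haa (n-1) (by omega)).2 ▸ hx0.2
      obtain ⟨hxv, hp1, hp2⟩ := pos_of_mem_seg hvs hxs
      set p := vs.idxOf x0 with hp
      have hplen : p < vs.length := List.idxOf_lt_length_iff.mpr hxv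
      obtain ⟨t, ht1, ht2, ht3, ht4⟩ := nat_ivt aa p i j
        (fun s hs1 hs2 => hstep s (by omega)) (by omega) (by omega)
      have htn : t < n - 1 := by omega
      have hxt : x0 ∈ es[t]'(by omega) := by
        rw [(haa t (by omega)).2, ← List.getElem_idxOf hplen]
        exact mem_seg_of_pos ht3 ht4 hplen
      have hmi := hmiss t (by omega) htn
      have : x0 ∈ f ∩ es[t]'(by omega) := Finset.mem_inter.mpr ⟨hx0.1, hxt⟩
      rw [hmi] at this
      exact absurd this (Finset.notMem_empty x0)
    -- use the reversed vertex list
    set aa' : ℕ → ℕ := fun i => vs.length - 3 - aa i with haa'def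
    have haa' : ∀ i (h : i < n), aa' i + 3 ≤ vs.reverse.length ∧ es[i] = seg vs.reverse (aa' i) := by
      intro i h
      have h1 := (haa i h).1
      constructor
      · rw [List.length_reverse]
        show vs.length - 3 - aa i + 3 ≤ vs.length
        omega
      · show es[i] = seg vs.reverse (vs.length - 3 - aa i)
        rw [seg_reverse h1]
        exact (haa i h).2
    have hord' : ∀ i, i < n - 1 → aa' i ≤ aa' (n - 1) := by
      intro i hi
      have h1 := (haa i (by omega)).1
      have h2 := (haa (n-1) (by omega)).1
      have h3 := hall i hi
      show vs.length - 3 - aa i ≤ vs.length - 3 - aa (n-1)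
      omega
    exact glue_right E e f es vs.reverse aa' (by rwa [List.nodup_reverse]) hne hhead
      hmemE hfE hchain haa' hf3 hmeet hmiss hord'

lemma isConnPath_reverse {E : Finset (Finset V)} {e f : Finset V} {S : Finset V}
    (h : IsConnPath E e f S) : IsConnPath E f e S := by
  obtain ⟨es, hne, hh, hl, hE, hc, hS, vs, hnd, htf, hsegs⟩ := h
  refine ⟨es.reverse, by simpa using hne, by rw [List.head?_reverse]; exact hl,
    by rw [List.getLast?_reverse]; exact hh, fun g hg => hE g (List.mem_reverse.mp hg), ?_, ?_,
    vs, hnd, htf, fun g hg => hsegs g (List.mem_reverse.mp hg)⟩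
  · refine (List.isChain_reverse (R := fun g h : Finset V => (g ∩ h).Nonempty)).mpr (?_ : List.Chain' (flip fun g h : Finset V => (g ∩ h).Nonempty) es)
    have : (flip fun g h : Finset V => (g ∩ h).Nonempty) = fun g h : Finset V => (g ∩ h).Nonempty := by
      funext g h
      simp [flip, Finset.inter_comm]
    rw [this]
    exact hc
  · rw [hS]
    exact foldr_union_perm (List.reverse_perm es).symm

lemma isConnPath_single {E : Finset (Finset V)} {e : Finset V} (heE : e ∈ E)
    (h3 : e.card = 3) : IsConnPath E e e e := by
  refine ⟨[e], by simp, rfl, rfl, by simpa using heE, List.isChain_singleton e, by simp, 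
    e.toList, Finset.nodup_toList e, by simp, ?_⟩
  intro g hg
  rw [List.mem_singleton] at hg
  subst hg
  refine ⟨0, ?_⟩
  rw [List.drop_zero, List.take_of_length_le (by rw [Finset.length_toList, h3])]
  simp

lemma head?_eq_getElem0 (l : List V') (hl : l ≠ []) :
    l.head? = some (l[0]'(List.length_pos_iff.mpr hl)) := by
  rcases l with _ | ⟨g, t⟩
  · exact absurd rfl hl
  · rfl

lemma side (E : Finset (Finset V)) (VE : Finset V) (e f1 : Finset V)
    (es : List (Finset V)) (vs : List V)
    (hvs : vs.Nodup) (hne : es ≠ []) (hhead : es.head? = some e) (heE : e ∈ E)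
    (hf1E : f1 ∈ E) (hf13 : f1.card = 3)
    (hchain : es.Chain' (fun g h => (g ∩ h).Nonempty))
    (hseg : ∀ g ∈ es, ∃ a, a + 3 ≤ vs.length ∧ g = seg vs a)
    (hVE : ∀ g ∈ E, g ⊆ VE)
    (hcross : ∀ g h : Finset V, g ∈ E → h ∈ es → h ∉ E → g ∩ h ⊆ f1)
    (hlast : ∀ g, es.getLast? = some g → g ∉ E) :
    ∃ A : Finset V, IsConnPath E e f1 (A ∪ f1) ∧ A ⊆ VE ∧
      A ⊆ es.foldr (· ∪ ·) ∅ ∧ e ⊆ A ∧ (f1 ∩ A).Nonempty := by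
  classical
  set n := es.length with hn
  have hn0 : 0 < n := List.length_pos_iff.mpr hne
  have hes0 : es[0]'hn0 = e := by
    rw [head?_eq_getElem0 es hne, Option.some.injEq] at hhead
    exact hhead
  -- first index outside E
  have hexJ : ∃ j, ∃ (h : j < n), es[j] ∉ E := by
    refine ⟨n - 1, by omega, ?_⟩
    apply hlast
    rw [List.getLast?_eq_getElem?, List.getElem?_eq_getElem (by omega)]
  obtain ⟨j1, ⟨hj1n, hj1E⟩, hj1min'⟩ := Nat.findX hexJ
  have hj1min : ∀ i, i < j1 → ∀ (h : i < n), es[i] ∈ E := by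
    intro i hi h
    by_contra hcon
    exact hj1min' i hi ⟨h, hcon⟩
  have hj1pos : 0 < j1 := by
    rcases Nat.eq_zero_or_pos j1 with h | h
    · exfalso
      subst h
      rw [hes0] at hj1E
      exact hj1E heE
    · exact h
  -- crossing gives an edge meeting f1
  have hmeetj : (f1 ∩ es[j1-1]'(by omega)).Nonempty := by
    have hrel := List.isChain_iff_getElem.mp hchain (j1-1) (by omega)
    obtain ⟨x, hx⟩ := hrel
    rw [Finset.mem_inter] at hx
    have hEq : es[j1-1+1]'(by omega) = es[j1]'(by omega) := by
      congr 1
      omega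
    rw [hEq] at hx
    have hsub := hcross (es[j1-1]'(by omega)) (es[j1]'(by omega))
      (hj1min (j1-1) (by omega) (by omega)) (List.getElem_mem _) hj1E
    exact ⟨x, Finset.mem_inter.mpr ⟨hsub (Finset.mem_inter.mpr hx), hx.1⟩⟩
  have hexK : ∃ k, ∃ (h : k < n), (f1 ∩ es[k]).Nonempty := ⟨j1 - 1, by omega, hmeetj⟩
  obtain ⟨k1, ⟨hk1n, hk1meet⟩, hk1min'⟩ := Nat.findX hexK
  have hk1min : ∀ i, i < k1 → ∀ (h : i < n), f1 ∩ es[i] = ∅ := by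
    intro i hi h
    by_contra hcon
    exact hk1min' i hi ⟨h, Finset.nonempty_iff_ne_empty.mpr hcon⟩
  have hk1j1 : k1 < j1 := by
    have : ¬ (j1 - 1 < k1) := fun hcon => hk1min' (j1-1) hcon ⟨by omega, hmeetj⟩
    omega
  -- the prefix path
  set ps := es.take (k1 + 1) with hps
  have hpslen : ps.length = k1 + 1 := by
    rw [hps, List.length_take]
    omega
  have hpsne : ps ≠ [] := List.ne_nil_of_length_pos (by omega)
  have hpsget : ∀ i (h : i < k1 + 1), ps[i]'(by omega) = es[i]'(by omega) := by
    intro i h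
    exact List.getElem_take
  have hglue := glue E e f1 ps vs hvs hpsne ?_ ?_ hf1E (hchain.take (k1+1)) ?_ hf13 ?_ ?_
  · refine ⟨ps.foldr (· ∪ ·) ∅, hglue, ?_, ?_, ?_, ?_⟩
    · intro x hx
      rw [mem_foldr_union] at hx
      obtain ⟨g, hg, hxg⟩ := hx
      obtain ⟨i, hi, hgi⟩ := List.mem_iff_getElem.mp hg
      rw [hpslen] at hi
      have hgE : g ∈ E := by
        rw [← hgi, hpsget i hi]
        exact hj1min i (by omega) (by omega)
      exact hVE g hgE hxg
    · intro x hx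
      rw [mem_foldr_union] at hx
      obtain ⟨g, hg, hxg⟩ := hx
      exact mem_foldr_union.mpr ⟨g, List.mem_of_mem_take hg, hxg⟩
    · intro x hx
      refine mem_foldr_union.mpr ⟨e, ?_, hx⟩
      have : ps[0]'(by omega) = e := by rw [hpsget 0 (by omega)]; exact hes0
      rw [← this]
      exact List.getElem_mem _
    · obtain ⟨x, hx⟩ := hk1meet
      rw [Finset.mem_inter] at hx
      refine ⟨x, Finset.mem_inter.mpr ⟨hx.1, ?_⟩⟩
      refine mem_foldr_union.mpr ⟨es[k1]'hk1n, ?_, hx.2⟩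
      rw [← hpsget k1 (by omega)]
      exact List.getElem_mem _
  · rw [head?_eq_getElem0 ps hpsne, hpsget 0 (by omega), hes0]
  · intro g hg
    obtain ⟨i, hi, hgi⟩ := List.mem_iff_getElem.mp hg
    rw [hpslen] at hi
    rw [← hgi, hpsget i hi]
    exact hj1min i (by omega) (by omega)
  · exact fun g hg => hseg g (List.mem_of_mem_take hg)
  · intro h
    have h1 : ps.length - 1 = k1 := by omega
    have : ps[ps.length - 1]'h = es[k1]'hk1n := by
      have h2 : ps[ps.length - 1]'h = ps[k1]'(by omega) := by
        congr 1
      rw [h2, hpsget k1 (by omega)]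
    rw [this]
    exact hk1meet
  · intro i hi hi2
    rw [hpslen] at hi hi2
    rw [hpsget i hi]
    exact hk1min i (by omega) (by omega)

end Aux

/-- Concatenating two positive signal senders: if `dist(e₁,f₁) = d ≥ 5` in `H₁` and
`dist(e₂,f₂) = d` in `H₂`, and `H'` is obtained by identifying `f₁` with `e₂` (the two
hypergraphs sharing no other vertices, with no vertex of `e₁` identified with one of
`f₂`), then `dist(e₁,f₂) ≥ d + 1` in `H'`. -/
theorem stmt_17 {V : Type} [DecidableEq V] (d : ℕ) (hd : 5 ≤ d)
    (E1 E2 : Finset (Finset V)) (e1 f1 e2 f2 : Finset V)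
    (h31 : ∀ g ∈ E1, g.card = 3) (h32 : ∀ g ∈ E2, g.card = 3)
    (he1 : e1 ∈ E1) (hf1 : f1 ∈ E1) (he2 : e2 ∈ E2) (hf2 : f2 ∈ E2)
    (hglue : f1 = e2)
    (hinter : (E1.sup id) ∩ (E2.sup id) = f1)
    (hno : e1 ∩ f2 = ∅)
    (hd1lb : ∀ S, IsConnPath E1 e1 f1 S → d ≤ S.card)
    (hd1ub : ∃ S, IsConnPath E1 e1 f1 S ∧ S.card = d)
    (hd2lb : ∀ S, IsConnPath E2 e2 f2 S → d ≤ S.card)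
    (hd2ub : ∃ S, IsConnPath E2 e2 f2 S ∧ S.card = d) :
    ∀ S, IsConnPath (E1 ∪ E2) e1 f2 S → d + 1 ≤ S.card := by
  classical
  intro S hS
  obtain ⟨es, hne, hhead, hlastf2, hmem, hchain, hSdef, vs, hnd, htfS, hsegs0⟩ := hS
  have hcard : ∀ g ∈ es, g.card = 3 := by
    intro g hg
    rcases Finset.mem_union.mp (hmem g hg) with h | h
    · exact h31 g h
    · exact h32 g h
  have hsegb : ∀ g ∈ es, ∃ a, a + 3 ≤ vs.length ∧ g = seg vs a := by
    intro g hg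
    obtain ⟨a, ha⟩ := hsegs0 g hg
    exact ⟨a, seg_card_le_bound ha (hcard g hg), ha⟩
  have hsubV1 : ∀ g ∈ E1, g ⊆ E1.sup id := by
    intro g hg
    exact Finset.le_sup (f := id) hg
  have hsubV2 : ∀ g ∈ E2, g ⊆ E2.sup id := by
    intro g hg
    exact Finset.le_sup (f := id) hg
  have hf1c : f1.card = 3 := h31 f1 hf1
  have hf1E2 : f1 ∈ E2 := by rw [hglue]; exact he2
  have he1n2 : e1 ∉ E2 := by
    intro hcon
    have hsub : e1 ⊆ f1 := by
      intro x hx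
      rw [← hinter]
      exact Finset.mem_inter.mpr ⟨hsubV1 e1 he1 hx, hsubV2 e1 hcon hx⟩
    have heq : e1 = f1 := Finset.eq_of_subset_of_card_le hsub (by rw [hf1c, h31 e1 he1])
    have hpath : IsConnPath E1 e1 f1 e1 := by
      rw [← heq]
      exact isConnPath_single he1 (h31 e1 he1)
    have := hd1lb e1 hpath
    rw [h31 e1 he1] at this
    omega
  have hf2n1 : f2 ∉ E1 := by
    intro hcon
    have hsub : f2 ⊆ f1 := by
      intro x hx
      rw [← hinter]
      exact Finset.mem_inter.mpr ⟨hsubV1 f2 hcon hx, hsubV2 f2 hf2 hx⟩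
    have heq : f2 = f1 := Finset.eq_of_subset_of_card_le hsub (by rw [hf1c, h32 f2 hf2])
    have hpath : IsConnPath E2 e2 f2 f2 := by
      rw [heq, ← hglue]
      exact isConnPath_single hf1E2 hf1c
    have := hd2lb f2 hpath
    rw [h32 f2 hf2] at this
    omega
  -- side 1
  obtain ⟨A, hApath, hAV1, hAS0, hAe1, hAf1⟩ := side E1 (E1.sup id) e1 f1 es vs hnd hne
    hhead he1 hf1 hf1c hchain hsegb hsubV1
    (by
      intro g h hg hh hhn
      have hh2 : h ∈ E2 := (Finset.mem_union.mp (hmem h hh)).resolve_left hhn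
      intro x hx
      rw [Finset.mem_inter] at hx
      rw [← hinter]
      exact Finset.mem_inter.mpr ⟨hsubV1 g hg hx.1, hsubV2 h hh2 hx.2⟩)
    (by
      intro g hg
      rw [hlastf2, Option.some.injEq] at hg
      rw [← hg]
      exact hf2n1)
  -- side 2
  have hchainrev : es.reverse.Chain' (fun g h => (g ∩ h).Nonempty) := by
    refine (List.isChain_reverse (R := fun g h : Finset V => (g ∩ h).Nonempty)).mpr (?_ : List.Chain' (flip fun g h : Finset V => (g ∩ h).Nonempty) es)
    have heq : (flip fun g h : Finset V => (g ∩ h).Nonempty) =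
        fun g h : Finset V => (g ∩ h).Nonempty := by
      funext g h
      simp [flip, Finset.inter_comm]
    rw [heq]
    exact hchain
  obtain ⟨B, hBpath, hBV2, hBS0, hBf2, hBf1⟩ := side E2 (E2.sup id) f2 f1 es.reverse vs hnd
    (by simpa using hne) (by rw [List.head?_reverse]; exact hlastf2) hf2 hf1E2 hf1c hchainrev
    (fun g hg => hsegb g (List.mem_reverse.mp hg)) hsubV2
    (by
      intro g h hg hh hhn
      have hh1 : h ∈ E1 := (Finset.mem_union.mp (hmem h (List.mem_reverse.mp hh))).resolve_right hhn
      intro x hx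
      rw [Finset.mem_inter] at hx
      rw [← hinter]
      exact Finset.mem_inter.mpr ⟨hsubV1 h hh1 hx.2, hsubV2 g hg hx.1⟩)
    (by
      intro g hg
      rw [List.getLast?_reverse, hhead, Option.some.injEq] at hg
      rw [← hg]
      exact he1n2)
  have hpath2 : IsConnPath E2 e2 f2 (B ∪ f1) := by
    rw [← hglue]
    exact isConnPath_reverse hBpath
  have d1 : d ≤ (A ∪ f1).card := hd1lb _ hApath
  have d2 : d ≤ (B ∪ f1).card := hd2lb _ hpath2
  have hAS : A ⊆ S := by rw [hSdef]; exact hAS0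
  have hBS : B ⊆ S := by
    rw [hSdef, foldr_union_perm (List.reverse_perm es).symm]
    exact hBS0
  -- counting
  have hABf1A : A ∩ B ⊆ A ∩ f1 := by
    intro x hx
    rw [Finset.mem_inter] at hx ⊢
    refine ⟨hx.1, ?_⟩
    rw [← hinter]
    exact Finset.mem_inter.mpr ⟨hAV1 hx.1, hBV2 hx.2⟩
  have hABf1B : A ∩ B ⊆ B ∩ f1 := by
    intro x hx
    rw [Finset.mem_inter] at hx ⊢
    refine ⟨hx.2, ?_⟩
    rw [← hinter]
    exact Finset.mem_inter.mpr ⟨hAV1 hx.1, hBV2 hx.2⟩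
  have hcu1 : (A ∪ f1).card + (A ∩ f1).card = A.card + f1.card :=
    Finset.card_union_add_card_inter A f1
  have hcu2 : (B ∪ f1).card + (B ∩ f1).card = B.card + f1.card :=
    Finset.card_union_add_card_inter B f1
  have hcu3 : (A ∪ B).card + (A ∩ B).card = A.card + B.card :=
    Finset.card_union_add_card_inter A B
  have hm1 : (A ∩ B).card ≤ (A ∩ f1).card := Finset.card_le_card hABf1A
  have hm2 : (A ∩ B).card ≤ (B ∩ f1).card := Finset.card_le_card hABf1B
  have ha1 : 1 ≤ (A ∩ f1).card := by
    rw [Finset.inter_comm]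
    exact Finset.card_pos.mpr hAf1
  have hb1 : 1 ≤ (B ∩ f1).card := by
    rw [Finset.inter_comm]
    exact Finset.card_pos.mpr hBf1
  have hABS : (A ∪ B).card ≤ S.card := Finset.card_le_card (Finset.union_subset hAS hBS)
  have hD : (A ∩ B).card = 0 ∨ 4 ≤ A.card ∨ 4 ≤ B.card := by
    rcases Nat.lt_or_ge A.card 4 with h4A | h4A
    · rcases Nat.lt_or_ge B.card 4 with h4B | h4B
      · left
        have hAe : A = e1 := (Finset.eq_of_subset_of_card_le hAe1 (by rw [h31 e1 he1]; omega)).symm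
        have hBe : B = f2 := (Finset.eq_of_subset_of_card_le hBf2 (by rw [h32 f2 hf2]; omega)).symm
        rw [Finset.card_eq_zero, hAe, hBe]
        exact hno
      · right; right; exact h4B
    · right; left; exact h4A
  rcases hD with h | h | h <;> omega
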